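/- Let H be a complex Hilbert space with H ≠ {0}. The bijection F : S/S¹ → ∂S(H), F([φ]) = |φ⟩⟨φ|, from the quotient of the unit sphere by phase factors to the set of rank-one orthogonal projections, is a homeomorphism when S/S¹ carries the quotient topology and ∂S(H) carries the initial topology generated by the functions P ↦ tr(PQ), Q ∈ ∂S(H). -/

import Mathlib

open scoped InnerProductSpace
open Metric

/-- The rank-one operator `χ ↦ ⟪φ, χ⟫ • φ` (orthogonal projection onto `ℂ φ` when `‖φ‖ = 1`). -/
noncomputable def proj (H : Type) [NormedAddCommGroup H] [InnerProductSpace ℂ H] (φ : H) :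
    H →L[ℂ] H := (innerSL ℂ φ).smulRight φ

/-- Equivalence of unit vectors up to a phase factor. -/
def phaseSetoid (H : Type) [NormedAddCommGroup H] [InnerProductSpace ℂ H] :
    Setoid (sphere (0 : H) 1) where
  r φ ψ := ∃ c : ℂ, ‖c‖ = 1 ∧ (φ : H) = c • (ψ : H)
  iseqv := by
    constructor
    · intro φ; exact ⟨1, by simp⟩
    · rintro φ ψ ⟨c, hc, h⟩
      have hc0 : c ≠ 0 := by intro h0; simp [h0] at hc
      exact ⟨c⁻¹, by simp [hc], by rw [h, smul_smul, inv_mul_cancel₀ hc0, one_smul]⟩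
    · rintro φ ψ ξ ⟨c, hc, h⟩ ⟨d, hd, h'⟩
      exact ⟨c * d, by simp [hc, hd], by rw [h, h', smul_smul]⟩

/-- The set of rank-one orthogonal projections (pure states) on `H`. -/
abbrev PureState (H : Type) [NormedAddCommGroup H] [InnerProductSpace ℂ H] : Type :=
  {P : H →L[ℂ] H // ∃ φ : H, ‖φ‖ = 1 ∧ P = proj H φ}

/-- The transition probability `h_Q(P) = tr(PQ) = ⟪φ, P φ⟫` where `Q = |φ⟩⟨φ|`. -/
noncomputable def transProb (H : Type) [NormedAddCommGroup H] [InnerProductSpace ℂ H]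
    (P Q : PureState H) : ℝ :=
  (⟪Q.2.choose, (P : H →L[ℂ] H) Q.2.choose⟫_ℂ).re

/-- The weak topology `𝒯₀` on the pure states: the coarsest topology making every
transition-probability function `P ↦ h_Q(P) = tr(PQ)` continuous. -/
noncomputable def weakTop (H : Type) [NormedAddCommGroup H] [InnerProductSpace ℂ H] :
    TopologicalSpace (PureState H) :=
  ⨅ Q : PureState H, TopologicalSpace.induced (fun P => transProb H P Q) inferInstance

/-- The pure state `|φ⟩⟨φ|` associated with a unit vector `φ`. -/
noncomputable def pureOf (H : Type) [NormedAddCommGroup H] [InnerProductSpace ℂ H]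
    (φ : sphere (0 : H) 1) : PureState H :=
  ⟨proj H (φ : H), φ, mem_sphere_zero_iff_norm.mp φ.2, rfl⟩

/-- The canonical bijection `F : S/S¹ → ∂S(H)`, `F([φ]) = |φ⟩⟨φ|`. -/
noncomputable def Fmap (H : Type) [NormedAddCommGroup H] [InnerProductSpace ℂ H] :
    Quotient (phaseSetoid H) → PureState H :=
  Quotient.lift (pureOf H) (by
    rintro φ ψ ⟨c, hc, h⟩
    have hcc : (starRingEnd ℂ) c * c = 1 := by
      rw [Complex.conj_mul', ← Complex.ofReal_pow, hc]; norm_num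
    apply Subtype.ext
    show proj H (φ : H) = proj H (ψ : H)
    ext x
    simp only [proj, ContinuousLinearMap.smulRight_apply, innerSL_apply_apply, h,
      inner_smul_left, smul_smul]
    rw [mul_right_comm, hcc, one_mul])

section Aux
variable {H : Type} [NormedAddCommGroup H] [InnerProductSpace ℂ H]

lemma transProb_eq (P Q : PureState H) (ψ : H) (hψ : (P : H →L[ℂ] H) = proj H ψ) :
    transProb H P Q = ‖⟪ψ, Q.2.choose⟫_ℂ‖ ^ 2 := by
  unfold transProb
  rw [hψ]
  generalize Q.2.choose = x
  simp only [proj, ContinuousLinearMap.smulRight_apply, innerSL_apply_apply, inner_smul_right]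
  rw [← inner_conj_symm ψ x, mul_comm, Complex.mul_conj]
  simp only [Complex.normSq_eq_norm_sq]
  rw [Complex.norm_conj]
  norm_cast

lemma proj_inj {φ ψ : H} (hφ : ‖φ‖ = 1) (hψ : ‖ψ‖ = 1) (h : proj H φ = proj H ψ) :
    ∃ c : ℂ, ‖c‖ = 1 ∧ φ = c • ψ := by
  have h1 : proj H φ φ = proj H ψ φ := by rw [h]
  have h2 : proj H φ φ = φ := by
    simp [proj, inner_self_eq_norm_sq_to_K, hφ]
  have h3 : φ = ⟪ψ, φ⟫_ℂ • ψ := h2.symm.trans h1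
  refine ⟨⟪ψ, φ⟫_ℂ, ?_, h3⟩
  have := congrArg norm h3
  rw [norm_smul, hψ, mul_one, hφ] at this
  exact this.symm

end Aux

/-- The bijection `F : S/S¹ → ∂S(H)`, `F([φ]) = |φ⟩⟨φ|`, is a homeomorphism
from the quotient topology to the weak topology `𝒯₀` generated by the
transition-probability functions. -/
theorem stmt17 (H : Type) [NormedAddCommGroup H] [InnerProductSpace ℂ H] [CompleteSpace H]
    [Nontrivial H] :
    letI : TopologicalSpace (PureState H) := weakTop H
    IsHomeomorph (Fmap H) := by
  letI : TopologicalSpace (PureState H) := weakTop H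
  -- Bijectivity
  have hbij : Function.Bijective (Fmap H) := by
    constructor
    · intro a b
      refine Quotient.inductionOn₂ a b ?_
      rintro ⟨φ, hφ⟩ ⟨ψ, hψ⟩ h
      have h' : proj H φ = proj H ψ := congrArg Subtype.val h
      exact Quotient.sound (proj_inj (mem_sphere_zero_iff_norm.mp hφ)
        (mem_sphere_zero_iff_norm.mp hψ) h')
    · intro P
      obtain ⟨φ, hφ, hP⟩ := P.2
      exact ⟨⟦⟨φ, mem_sphere_zero_iff_norm.mpr hφ⟩⟧, Subtype.ext hP.symm⟩
  -- Continuity of pureOf, hence of Fmap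
  have hpure : Continuous (pureOf H) := by
    show @Continuous _ _ _ (weakTop H) (pureOf H)
    rw [weakTop]
    refine continuous_iInf_rng.mpr fun Q => continuous_induced_rng.mpr ?_
    have heq : (fun φ : sphere (0 : H) 1 => transProb H (pureOf H φ) Q)
        = fun φ : sphere (0 : H) 1 => ‖⟪(φ : H), Q.2.choose⟫_ℂ‖ ^ 2 :=
      funext fun φ => transProb_eq _ _ _ rfl
    simp only [Function.comp_def]
    rw [heq]
    exact ((continuous_subtype_val.inner continuous_const).norm.pow 2)
  have hcont : Continuous (Fmap H) := hpure.quotient_lift _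
  -- Inverse continuity
  set e := Equiv.ofBijective (Fmap H) hbij with he
  have hsymm : Continuous e.symm := by
    rw [continuous_iff_continuousAt]
    intro P
    set φ₀ : H := P.2.choose with hφ₀def
    have hφ₀ : ‖φ₀‖ = 1 ∧ (P : H →L[ℂ] H) = proj H φ₀ := P.2.choose_spec
    set φ₀s : sphere (0 : H) 1 := ⟨φ₀, mem_sphere_zero_iff_norm.mpr hφ₀.1⟩
    have hesymmP : e.symm P = ⟦φ₀s⟧ := by
      rw [Equiv.symm_apply_eq]
      exact Subtype.ext hφ₀.2
    intro V hV
    rw [hesymmP] at hV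
    obtain ⟨U, hUV, hUopen, hmemU⟩ := mem_nhds_iff.mp hV
    have hpre : IsOpen ((Quotient.mk (phaseSetoid H)) ⁻¹' U) :=
      hUopen.preimage continuous_quotient_mk'
    have hmem' : φ₀s ∈ (Quotient.mk (phaseSetoid H)) ⁻¹' U := hmemU
    obtain ⟨ε, hε, hball⟩ := Metric.isOpen_iff.mp hpre φ₀s hmem'
    set δ : ℝ := min (ε ^ 2 / 2) (1 / 2) with hδdef
    have hδpos : 0 < δ := lt_min (by positivity) (by norm_num)
    set W : Set (PureState H) := (fun P' => transProb H P' P) ⁻¹' Set.Ioi (1 - δ) with hWdef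
    have hWopen : IsOpen W := by
      have hle : weakTop H ≤ TopologicalSpace.induced (fun P' => transProb H P' P)
          inferInstance := iInf_le _ P
      exact hle _ (isOpen_induced isOpen_Ioi)
    have hPW : P ∈ W := by
      have : transProb H P P = 1 := by
        rw [transProb_eq P P φ₀ hφ₀.2]
        have : ⟪φ₀, φ₀⟫_ℂ = 1 := by
          rw [inner_self_eq_norm_sq_to_K, hφ₀.1]; norm_num
        rw [← hφ₀def, this]; norm_num
      simp only [hWdef, Set.mem_preimage, Set.mem_Ioi, this]
      linarith
    rw [Filter.mem_map]
    refine Filter.mem_of_superset (hWopen.mem_nhds hPW) ?_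
    intro P' hP'
    set ψ : H := P'.2.choose with hψdef
    have hψ : ‖ψ‖ = 1 ∧ (P' : H →L[ℂ] H) = proj H ψ := P'.2.choose_spec
    set a : ℂ := ⟪ψ, φ₀⟫_ℂ with hadef
    have hta : transProb H P' P = ‖a‖ ^ 2 := transProb_eq P' P ψ hψ.2
    have ha2 : 1 - δ < ‖a‖ ^ 2 := by
      have := hP'; rw [hWdef, Set.mem_preimage, Set.mem_Ioi, hta] at this; exact this
    have hale : ‖a‖ ≤ 1 := by
      have := norm_inner_le_norm (𝕜 := ℂ) ψ φ₀
      rwa [hψ.1, hφ₀.1, mul_one] at this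
    have hage : ‖a‖ ^ 2 ≤ ‖a‖ := by
      nlinarith [norm_nonneg a]
    have halow : 1 - δ < ‖a‖ := lt_of_lt_of_le ha2 hage
    have hapos : 0 < ‖a‖ := by
      have : δ ≤ 1 / 2 := min_le_right _ _
      linarith
    have ha0 : a ≠ 0 := norm_pos_iff.mp hapos
    set c : ℂ := a / (‖a‖ : ℂ) with hcdef
    have hcnorm : ‖c‖ = 1 := by
      rw [hcdef, norm_div, Complex.norm_real, Real.norm_eq_abs, abs_of_pos hapos,
        div_self hapos.ne']
    set χ : H := c • ψ with hχdef
    have hχnorm : ‖χ‖ = 1 := by rw [hχdef, norm_smul, hcnorm, hψ.1, mul_one]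
    have hinner : ⟪χ, φ₀⟫_ℂ = (‖a‖ : ℂ) := by
      rw [hχdef, inner_smul_left, ← hadef, hcdef]
      rw [map_div₀, Complex.conj_ofReal]
      have hne : (‖a‖ : ℂ) ≠ 0 := by exact_mod_cast hapos.ne'
      rw [div_mul_eq_mul_div, Complex.conj_mul', pow_two, mul_div_assoc,
        div_self hne, mul_one]
    have hdist : ‖χ - φ₀‖ < ε := by
      have hsq : ‖χ - φ₀‖ ^ 2 = 2 - 2 * ‖a‖ := by
        rw [@norm_sub_sq ℂ _ _ _ _ χ φ₀, hχnorm, hφ₀.1, hinner]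
        have hre : RCLike.re ((‖a‖ : ℝ) : ℂ) = ‖a‖ := by simp [Complex.ofReal_re]
        rw [hre]; ring
      have hδ1 : δ ≤ ε ^ 2 / 2 := min_le_left _ _
      have : ‖χ - φ₀‖ ^ 2 < ε ^ 2 := by rw [hsq]; nlinarith
      exact lt_of_pow_lt_pow_left₀ 2 hε.le this
    set χs : sphere (0 : H) 1 := ⟨χ, mem_sphere_zero_iff_norm.mpr hχnorm⟩
    have hχU : (⟦χs⟧ : Quotient (phaseSetoid H)) ∈ U := by
      apply hball
      rw [mem_ball]
      rw [Subtype.dist_eq, dist_eq_norm]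
      exact hdist
    have hesymmP' : e.symm P' = ⟦χs⟧ := by
      rw [Equiv.symm_apply_eq]
      have h1 : e ⟦χs⟧ = pureOf H χs := rfl
      rw [h1]
      apply Subtype.ext
      show (P' : H →L[ℂ] H) = proj H χ
      rw [hψ.2]
      -- proj H ψ = proj H (c • ψ)
      ext x
      have hcc : (starRingEnd ℂ) c * c = 1 := by
        rw [Complex.conj_mul', ← Complex.ofReal_pow, hcnorm]; norm_num
      simp only [proj, ContinuousLinearMap.smulRight_apply, innerSL_apply_apply, hχdef,
        inner_smul_left, smul_smul]
      rw [mul_right_comm, hcc, one_mul]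
    exact Set.mem_preimage.mpr (hUV (hesymmP' ▸ hχU))
  exact Homeomorph.isHomeomorph ⟨e, hcont, hsymm⟩
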